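/- arXiv:1503.07591 — 5 statements merged into one kernel-verified Lean document; each statement's English description precedes it below -/
import Mathlib

section
/- Under the assumptions of the identifiability setup (two representations $a\cos\phi=(a+\alpha)\cos(\phi+\beta)$ with positive amplitudes and positive instantaneous frequencies), the integers $k_n$ defined by $\beta(t_n)=k_n\pi$ at the points $t_n=\phi^{-1}((n+1/2)\pi)$ are all equal to a common even integer. -/
open Real

theorem stmt1 (a α φ β : ℝ → ℝ)
    (ha : Continuous a) (hα : Continuous α)
    (hapos : ∀ t, 0 < a t) (haα : ∀ t, 0 < a t + α t)
    (hφ : ContDiff ℝ 1 φ) (hβ : ContDiff ℝ 1 β)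
    (hφ' : ∀ t, 0 < deriv φ t) (hφβ' : ∀ t, 0 < deriv φ t + deriv β t)
    (hφsurj : Function.Surjective φ)
    (heq : ∀ t, a t * Real.cos (φ t) = (a t + α t) * Real.cos (φ t + β t)) :
    ∃ k : ℤ, Even k ∧
      ∀ (n : ℤ) (tn : ℝ), φ tn = (n + 1/2) * π → β tn = k * π := by
  set ψ : ℝ → ℝ := fun t => φ t + β t with hψdef
  have hφd : Differentiable ℝ φ := hφ.differentiable one_ne_zero
  have hβd : Differentiable ℝ β := hβ.differentiable one_ne_zero
  have hφmono : StrictMono φ := strictMono_of_deriv_pos hφ'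
  have hψmono : StrictMono ψ := by
    apply strictMono_of_deriv_pos
    intro t
    have hd : deriv ψ t = deriv φ t + deriv β t := deriv_add (hφd t) (hβd t)
    rw [hd]; exact hφβ' t
  have hψc : Continuous ψ := hφd.continuous.add hβd.continuous
  -- zero transfer
  have hzf : ∀ t, Real.cos (φ t) = 0 → Real.cos (ψ t) = 0 := by
    intro t h
    have h2 := heq t
    rw [h, mul_zero] at h2
    exact (mul_eq_zero.mp h2.symm).resolve_left (ne_of_gt (haα t))
  have hzb : ∀ t, Real.cos (ψ t) = 0 → Real.cos (φ t) = 0 := by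
    intro t h
    have h2 := heq t
    have h3 : (a t + α t) * Real.cos (ψ t) = (a t + α t) * Real.cos (φ t + β t) := rfl
    rw [← h3, h, mul_zero] at h2
    exact (mul_eq_zero.mp h2).resolve_left (ne_of_gt (hapos t))
  -- positivity transfer
  have hposf : ∀ t, 0 < Real.cos (φ t) → 0 < Real.cos (ψ t) := by
    intro t h
    have h2 := heq t
    have h3 : (0:ℝ) < a t * Real.cos (φ t) := mul_pos (hapos t) h
    nlinarith [haα t]
  -- cos ((m + 1/2)π) = 0
  have hcz : ∀ m : ℤ, Real.cos ((m + 1/2) * π) = 0 := by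
    intro m
    rw [Real.cos_eq_zero_iff]
    exact ⟨m, by ring⟩
  -- step lemma
  have step : ∀ t s : ℝ, Real.cos (φ t) = 0 → φ s = φ t + π → ψ s = ψ t + π := by
    intro t s hct hfs
    have hcs : Real.cos (φ s) = 0 := by rw [hfs, Real.cos_add_pi, hct, neg_zero]
    have hts : t < s := hφmono.lt_iff_lt.mp (by rw [hfs]; linarith [Real.pi_pos])
    obtain ⟨m1, hm1⟩ := Real.cos_eq_zero_iff.mp (hzf t hct)
    obtain ⟨m2, hm2⟩ := Real.cos_eq_zero_iff.mp (hzf s hcs)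
    have hlt : ψ t < ψ s := hψmono hts
    have hle : ψ s ≤ ψ t + π := by
      by_contra hgt
      push_neg at hgt
      have hmem : ψ t + π ∈ Set.Ioo (ψ t) (ψ s) := ⟨by linarith [Real.pi_pos], hgt⟩
      obtain ⟨u, hu, hψu⟩ := intermediate_value_Ioo hts.le hψc.continuousOn hmem
      have hcu : Real.cos (ψ u) = 0 := by
        rw [hψu, Real.cos_add_pi, hzf t hct, neg_zero]
      obtain ⟨m3, hm3⟩ := Real.cos_eq_zero_iff.mp (hzb u hcu)
      obtain ⟨n', hn'⟩ := Real.cos_eq_zero_iff.mp hct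
      have h1 : φ t < φ u := hφmono hu.1
      have h2 : φ u < φ t + π := by
        rw [← hfs]; exact hφmono hu.2
      rw [hm3, hn'] at h1 h2
      have hpi := Real.pi_pos
      have hi1 : (n' : ℝ) < m3 := by nlinarith
      have hi2 : (m3 : ℝ) < n' + 1 := by nlinarith
      have : n' < m3 := by exact_mod_cast hi1
      have : m3 < n' + 1 := by exact_mod_cast hi2
      omega
    -- ψ s - ψ t = (m2 - m1) π ∈ (0, π] ⇒ = π
    rw [hm1, hm2] at hlt hle ⊢
    have hpi := Real.pi_pos
    have hi1 : (m1 : ℝ) < m2 := by nlinarith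
    have hi2 : (m2 : ℝ) ≤ m1 + 1 := by nlinarith
    have e1 : m1 < m2 := by exact_mod_cast hi1
    have e2 : m2 ≤ m1 + 1 := by exact_mod_cast hi2
    have : m2 = m1 + 1 := by omega
    subst this
    push_cast
    ring
  -- base point
  obtain ⟨t0, ht0⟩ := hφsurj (((0:ℤ) + 1/2) * π)
  have hct0 : Real.cos (φ t0) = 0 := by rw [ht0]; exact hcz 0
  obtain ⟨m, hm⟩ := Real.cos_eq_zero_iff.mp (hzf t0 hct0)
  -- key induction
  have key : ∀ n : ℤ, ∀ t : ℝ, φ t = (n + 1/2) * π → ψ t = ψ t0 + n * π := by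
    intro n
    induction n using Int.induction_on with
    | zero =>
      intro t ht
      have : t = t0 := hφmono.injective (by rw [ht, ht0])
      rw [this]; norm_num
    | succ i ih =>
      intro t ht
      obtain ⟨s, hs⟩ := hφsurj (((i : ℤ) + 1/2) * π)
      have hcs : Real.cos (φ s) = 0 := by rw [hs]; exact hcz i
      have hst : φ t = φ s + π := by rw [ht, hs]; push_cast; ring
      have := step s t hcs hst
      rw [this, ih s hs]; push_cast; ring
    | pred i ih =>
      intro t ht
      obtain ⟨s, hs⟩ := hφsurj (((-i : ℤ) + 1/2) * π)
      have hct : Real.cos (φ t) = 0 := by rw [ht]; exact hcz (-i - 1)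
      have hst : φ s = φ t + π := by rw [ht, hs]; push_cast; ring
      have := step t s hct hst
      have h2 := ih s hs
      rw [h2] at this
      push_cast at this ⊢
      linarith
  -- evenness of m
  have hψt0 : ψ t0 = (2 * m + 1) * π / 2 := hm
  have hmeven : Even m := by
    rcases Int.even_or_odd m with he | ho
    · exact he
    exfalso
    obtain ⟨j, hj⟩ := ho
    obtain ⟨t1, ht1⟩ := hφsurj 0
    obtain ⟨t2, ht2⟩ := hφsurj (((-1:ℤ) + 1/2) * π)
    have hψt2 : ψ t2 = ψ t0 - π := by
      have := key (-1) t2 ht2; push_cast at this; linarith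
    have hpi := Real.pi_pos
    have h21 : t2 < t1 := hφmono.lt_iff_lt.mp (by rw [ht1, ht2]; push_cast; nlinarith)
    have h10 : t1 < t0 := hφmono.lt_iff_lt.mp (by rw [ht1, ht0]; push_cast; nlinarith)
    have hl : ψ t0 - π < ψ t1 := by have := hψmono h21; rw [hψt2] at this; linarith
    have hr : ψ t1 < ψ t0 := hψmono h10
    have hcpos : 0 < Real.cos (ψ t1) := by
      apply hposf
      rw [ht1, Real.cos_zero]; norm_num
    set x : ℝ := ψ t1 - m * π with hx
    have hx1 : -(π/2) < x := by rw [hψt0] at hl; rw [hx]; push_cast at hl ⊢; nlinarith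
    have hx2 : x < π/2 := by rw [hψt0] at hr; rw [hx]; push_cast at hr ⊢; nlinarith
    have hcx : 0 < Real.cos x := Real.cos_pos_of_mem_Ioo ⟨hx1, hx2⟩
    have hval : Real.cos (ψ t1) = -Real.cos x := by
      have : ψ t1 = x + π + (j : ℤ) * (2 * π) := by rw [hx, hj]; push_cast; ring
      rw [this, Real.cos_add_int_mul_two_pi, Real.cos_add_pi]
    rw [hval] at hcpos
    linarith
  refine ⟨m, hmeven, ?_⟩
  intro n tn htn
  have hψtn : ψ tn = ψ t0 + n * π := key n tn htn
  have : β tn = ψ tn - φ tn := by simp [hψdef]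
  rw [this, hψtn, htn, hψt0]
  push_cast
  ring
end

section
/- Under the identifiability setup with the normalization $\beta(t_n)=0$ for all $n$, for any $t',t''\in[t_n,t_{n+1}]$ one has $|\beta(t')-\beta(t'')|<\pi$, where $t_n=\phi^{-1}((n+1/2)\pi)$. -/
open Real

theorem stmt2 (φ β : ℝ → ℝ)
    (hφ : ContDiff ℝ 1 φ) (hβ : ContDiff ℝ 1 β)
    (hφ' : ∀ t, 0 < deriv φ t) (hφβ' : ∀ t, 0 < deriv φ t + deriv β t)
    (hφsurj : Function.Surjective φ)
    (n : ℤ) (tn tn1 : ℝ)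
    (htn : φ tn = (n + 1/2) * π) (htn1 : φ tn1 = (n + 1 + 1/2) * π)
    (hβtn : β tn = 0) (hβtn1 : β tn1 = 0)
    (t' t'' : ℝ) (ht' : t' ∈ Set.Icc tn tn1) (ht'' : t'' ∈ Set.Icc tn tn1) :
    |β t' - β t''| < π := by
  have hφd : Differentiable ℝ φ := hφ.differentiable one_ne_zero
  have hβd : Differentiable ℝ β := hβ.differentiable one_ne_zero
  have hφmono : StrictMono φ :=
    strictMono_of_deriv_pos hφ'
  have hFmono : StrictMono (fun t => φ t + β t) := by
    apply strictMono_of_deriv_pos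
    intro t
    rw [deriv_fun_add (hφd t) (hβd t)]
    exact hφβ' t
  have hFtn : φ tn + β tn = (n + 1/2) * π := by rw [hβtn, htn]; ring
  have hFtn1 : φ tn1 + β tn1 = (n + 1 + 1/2) * π := by rw [hβtn1, htn1]; ring
  have key : ∀ x y : ℝ, tn ≤ x → x ≤ y → y ≤ tn1 → |β x - β y| < π := by
    intro x y hx hxy hy
    rcases eq_or_lt_of_le hxy with rfl | hlt
    · simpa using Real.pi_pos
    · have hFlt : φ x + β x < φ y + β y := hFmono hlt
      have hφlt : φ x < φ y := hφmono hlt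
      have hFx : φ tn + β tn ≤ φ x + β x := hFmono.monotone hx
      have hFy : φ y + β y ≤ φ tn1 + β tn1 := hFmono.monotone hy
      have hφx : φ tn ≤ φ x := hφmono.monotone hx
      have hφy : φ y ≤ φ tn1 := hφmono.monotone hy
      rw [hFtn] at hFx
      rw [hFtn1] at hFy
      rw [htn] at hφx
      rw [htn1] at hφy
      rw [abs_lt]
      constructor <;> nlinarith [Real.pi_pos]
  rcases le_total t' t'' with h | h
  · exact key t' t'' ht'.1 h ht''.2
  · rw [abs_sub_comm]
    exact key t'' t' ht''.1 h ht'.2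
end

section
/- Under the identifiability setup with normalization $\beta(t_n)=0$, at each $t_n=\phi^{-1}((n+1/2)\pi)$ one has $\frac{a(t_n)}{a(t_n)+\alpha(t_n)}=\frac{\phi'(t_n)+\beta'(t_n)}{\phi'(t_n)}$; in particular $\alpha(t_n)=0$ if and only if $\beta'(t_n)=0$. -/
open Real

theorem stmt4 (a α φ β : ℝ → ℝ)
    (ha : Continuous a) (hα : Continuous α)
    (hapos : ∀ t, 0 < a t) (haα : ∀ t, 0 < a t + α t)
    (hφ : ContDiff ℝ 1 φ) (hβ : ContDiff ℝ 1 β)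
    (hφ' : ∀ t, 0 < deriv φ t) (hφβ' : ∀ t, 0 < deriv φ t + deriv β t)
    (hφsurj : Function.Surjective φ)
    (heq : ∀ t, a t * Real.cos (φ t) = (a t + α t) * Real.cos (φ t + β t))
    (n : ℤ) (tn : ℝ) (htn : φ tn = (n + 1/2) * π) (hβtn : β tn = 0) :
    a tn / (a tn + α tn) = (deriv φ tn + deriv β tn) / deriv φ tn ∧
    (α tn = 0 ↔ deriv β tn = 0) := by
  have hφd : Differentiable ℝ φ := hφ.differentiable one_ne_zero
  have hβd : Differentiable ℝ β := hβ.differentiable one_ne_zero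
  have hc1 : Real.cos (φ tn) = 0 := by
    rw [htn]
    have : ((n : ℝ) + 1/2) * π = n * π + π/2 := by ring
    rw [this, Real.cos_add]
    simp [Real.sin_int_mul_pi]
  have hc2 : Real.cos (φ tn + β tn) = 0 := by rw [hβtn, add_zero]; exact hc1
  have hs : Real.sin (φ tn) ≠ 0 := by
    rw [htn]
    have : ((n : ℝ) + 1/2) * π = n * π + π/2 := by ring
    rw [this, Real.sin_add]
    simp [Real.sin_int_mul_pi, Real.cos_pi_div_two]
    have h0 : Real.sin ((n : ℝ) * π) = 0 := Real.sin_int_mul_pi n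
    have h1 := Real.sin_sq_add_cos_sq ((n : ℝ) * π)
    intro hc
    rw [h0, hc] at h1
    norm_num at h1
  have h1 : HasDerivAt (fun t => Real.cos (φ t))
      (-Real.sin (φ tn) * deriv φ tn) tn := (hφd tn).hasDerivAt.cos
  have h2 : HasDerivAt (fun t => Real.cos (φ t + β t))
      (-Real.sin (φ tn + β tn) * (deriv φ tn + deriv β tn)) tn :=
    ((hφd tn).hasDerivAt.add (hβd tn).hasDerivAt).cos
  have t1 : Filter.Tendsto (fun t => a t * slope (fun t => Real.cos (φ t)) tn t)
      (nhdsWithin tn {tn}ᶜ) (nhds (a tn * (-Real.sin (φ tn) * deriv φ tn))) :=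
    ((ha.tendsto tn).mono_left nhdsWithin_le_nhds).mul
      (hasDerivAt_iff_tendsto_slope.mp h1)
  have t2 : Filter.Tendsto (fun t => (a t + α t) * slope (fun t => Real.cos (φ t + β t)) tn t)
      (nhdsWithin tn {tn}ᶜ) (nhds ((a tn + α tn) * (-Real.sin (φ tn + β tn) * (deriv φ tn + deriv β tn)))) :=
    (((ha.tendsto tn).add (hα.tendsto tn)).mono_left nhdsWithin_le_nhds).mul
      (hasDerivAt_iff_tendsto_slope.mp h2)
  have heqf : ∀ t ∈ ({tn}ᶜ : Set ℝ),
      a t * slope (fun t => Real.cos (φ t)) tn t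
        = (a t + α t) * slope (fun t => Real.cos (φ t + β t)) tn t := by
    intro t ht
    simp only [slope_def_field, hc1, hc2, sub_zero]
    rw [← mul_div_assoc, ← mul_div_assoc, heq t]
  have t1' : Filter.Tendsto (fun t => (a t + α t) * slope (fun t => Real.cos (φ t + β t)) tn t)
      (nhdsWithin tn {tn}ᶜ) (nhds (a tn * (-Real.sin (φ tn) * deriv φ tn))) :=
    t1.congr' (Filter.eventuallyEq_of_mem self_mem_nhdsWithin heqf)
  have key : a tn * (-Real.sin (φ tn) * deriv φ tn)
      = (a tn + α tn) * (-Real.sin (φ tn + β tn) * (deriv φ tn + deriv β tn)) :=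
    tendsto_nhds_unique t1' t2
  rw [hβtn, add_zero] at key
  have key2 : a tn * deriv φ tn = (a tn + α tn) * (deriv φ tn + deriv β tn) := by
    apply mul_left_cancel₀ hs
    linear_combination -key
  constructor
  · rw [div_eq_div_iff (haα tn).ne' (hφ' tn).ne']
    linarith [key2]
  · constructor
    · intro h
      rw [h, add_zero] at key2
      have := mul_left_cancel₀ (hapos tn).ne' key2
      linarith
    · intro h
      rw [h, add_zero] at key2
      have := mul_right_cancel₀ (hφ' tn).ne' key2
      linarith
end

section
/- Suppose $g(t)=a(t)\cos\phi(t)=(a(t)+\alpha(t))\cos(\phi(t)+\beta(t))$ where both representations lie in the class $\mathcal{Q}^{c_1,c_2,c_3}_\epsilon$ (so in particular $|a'|\le\epsilon\phi'$, $|a'+\alpha'|\le\epsilon(\phi'+\beta')$, $c_1\le\phi',\phi'+\beta'\le c_2$, amplitudes in $[c_1,c_2]$), with the normalization $\beta(t_n)=0$ at $t_n=\phi^{-1}((n+1/2)\pi)$. Then $|\alpha(t)|\le 2\pi\epsilon$ for all $t\in\mathbb{R}$. -/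
open Real

set_option maxHeartbeats 1000000 in
theorem stmt6 (ε c1 c2 c3 : ℝ)
    (hε : 0 ≤ ε) (hεc1 : ε < c1) (hc12 : c1 < c2) (hεc3 : ε < c3) (hc32 : c3 < c2)
    (a α φ β : ℝ → ℝ)
    (ha : ContDiff ℝ 1 a) (hα : ContDiff ℝ 1 α)
    (hφ : ContDiff ℝ 3 φ) (hβ : ContDiff ℝ 3 β)
    -- first representation lies in Q^{c1,c2,c3}_ε
    (ha1 : ∀ t, c1 ≤ a t) (ha2 : ∀ t, a t ≤ c2)
    (hφ1 : ∀ t, c1 ≤ deriv φ t) (hφ2 : ∀ t, deriv φ t ≤ c2)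
    (hφ'' : ∀ t, |deriv (deriv φ) t| ≤ c3)
    (ha' : ∀ t, |deriv a t| ≤ ε * deriv φ t)
    (hφ''' : ∀ t, |deriv (deriv (deriv φ)) t| ≤ ε * deriv φ t)
    -- second representation lies in Q^{c1,c2,c3}_ε
    (hA1 : ∀ t, c1 ≤ a t + α t) (hA2 : ∀ t, a t + α t ≤ c2)
    (hψ1 : ∀ t, c1 ≤ deriv φ t + deriv β t) (hψ2 : ∀ t, deriv φ t + deriv β t ≤ c2)
    (hψ'' : ∀ t, |deriv (deriv φ) t + deriv (deriv β) t| ≤ c3)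
    (hA' : ∀ t, |deriv a t + deriv α t| ≤ ε * (deriv φ t + deriv β t))
    (hψ''' : ∀ t, |deriv (deriv (deriv φ)) t + deriv (deriv (deriv β)) t|
        ≤ ε * (deriv φ t + deriv β t))
    (hφsurj : Function.Surjective φ)
    (heq : ∀ t, a t * Real.cos (φ t) = (a t + α t) * Real.cos (φ t + β t))
    -- normalization : β vanishes at the points t_n = φ⁻¹((n+1/2)π)
    (hnorm : ∀ (n : ℤ) (tn : ℝ), φ tn = (n + 1/2) * π → β tn = 0) :
    ∀ t, |α t| ≤ 2 * π * ε := by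
  have hπ := Real.pi_pos
  have hc1 : 0 < c1 := lt_of_le_of_lt hε hεc1
  -- basic smoothness facts
  have hφd : Differentiable ℝ φ := hφ.differentiable (by norm_num)
  have hβd : Differentiable ℝ β := hβ.differentiable (by norm_num)
  have hαd : Differentiable ℝ α := hα.differentiable (by norm_num)
  have hφ'c : Continuous (deriv φ) := hφ.continuous_deriv (by norm_num)
  have hβ'c : Continuous (deriv β) := hβ.continuous_deriv (by norm_num)
  have hα'c : Continuous (deriv α) := hα.continuous_deriv le_rfl
  have hφmono : StrictMono φ := by
    apply strictMono_of_deriv_pos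
    intro x; exact lt_of_lt_of_le hc1 (hφ1 x)
  -- pointwise bound for α'
  have hbound : ∀ u, |deriv α u| ≤ ε * (2 * deriv φ u + deriv β u) := by
    intro u
    have h1 := hA' u; have h2 := ha' u
    rw [abs_le] at h1 h2 ⊢
    constructor <;> nlinarith [h1.1, h1.2, h2.1, h2.2]
  intro t
  -- locate t between consecutive normalization points
  obtain ⟨m, hml, hmu⟩ : ∃ m : ℤ, (m : ℝ) ≤ φ t / π - 1/2 ∧ φ t / π - 1/2 < m + 1 :=
    ⟨⌊φ t / π - 1/2⌋, Int.floor_le _, Int.lt_floor_add_one _⟩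
  obtain ⟨tm, htm⟩ := hφsurj (((m : ℝ) + 1/2) * π)
  obtain ⟨tm1, htm1⟩ := hφsurj (((m : ℝ) + 3/2) * π)
  have hφt1 : ((m : ℝ) + 1/2) * π ≤ φ t := by
    rw [div_sub' (ne_of_gt hπ)] at hml
    · nlinarith [(le_div_iff₀ hπ).mp hml]
  have hφt2 : φ t ≤ ((m : ℝ) + 3/2) * π := by
    have := (div_lt_iff₀ hπ).mp (by linarith : φ t / π < (m : ℝ) + 3/2)
    linarith
  have httm : tm ≤ t := by
    by_contra h
    exact absurd (hφmono (lt_of_not_ge h)) (by rw [htm]; linarith)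
  have httm1 : t ≤ tm1 := by
    by_contra h
    exact absurd (hφmono (lt_of_not_ge h)) (by rw [htm1]; linarith)
  have htmle : tm ≤ tm1 := le_trans httm httm1
  have hβtm : β tm = 0 := hnorm m tm htm
  have hβtm1 : β tm1 = 0 := hnorm (m+1) tm1 (by push_cast; linarith [htm1])
  -- oscillation bound on [tm, tm1]
  have hgi : ∀ x y : ℝ, IntervalIntegrable (fun u => ε * (2 * deriv φ u + deriv β u)) MeasureTheory.volume x y :=
    fun x y => (Continuous.intervalIntegrable (by continuity) x y)
  have hαi : ∀ x y : ℝ, IntervalIntegrable (deriv α) MeasureTheory.volume x y :=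
    fun x y => hα'c.intervalIntegrable x y
  have hgtot : (∫ u in tm..tm1, ε * (2 * deriv φ u + deriv β u)) = 2 * π * ε := by
    rw [intervalIntegral.integral_const_mul]
    have h1 : (∫ u in tm..tm1, (2 * deriv φ u + deriv β u)) =
        2 * (φ tm1 - φ tm) + (β tm1 - β tm) := by
      rw [intervalIntegral.integral_add ((hφ'c.intervalIntegrable _ _).const_mul 2)
        (hβ'c.intervalIntegrable _ _), intervalIntegral.integral_const_mul,
        intervalIntegral.integral_deriv_eq_sub (fun x _ => hφd x) (hφ'c.intervalIntegrable _ _),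
        intervalIntegral.integral_deriv_eq_sub (fun x _ => hβd x) (hβ'c.intervalIntegrable _ _)]
    rw [h1, hβtm, hβtm1, htm, htm1]; ring
  have osc : ∀ x y : ℝ, tm ≤ x → x ≤ y → y ≤ tm1 → |α y - α x| ≤ 2 * π * ε := by
    intro x y hx hxy hy
    have heq1 : α y - α x = ∫ u in x..y, deriv α u :=
      (intervalIntegral.integral_deriv_eq_sub (fun u _ => hαd u) (hαi x y)).symm
    rw [heq1]
    calc |∫ u in x..y, deriv α u| ≤ ∫ u in x..y, |deriv α u| :=
          intervalIntegral.abs_integral_le_integral_abs hxy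
      _ ≤ ∫ u in x..y, ε * (2 * deriv φ u + deriv β u) := by
          apply intervalIntegral.integral_mono_on hxy
            ((hα'c.abs).intervalIntegrable x y) (hgi x y)
          intro u _; exact hbound u
      _ ≤ ∫ u in tm..tm1, ε * (2 * deriv φ u + deriv β u) := by
          apply intervalIntegral.integral_mono_interval hx hxy hy _ (hgi tm tm1)
          apply MeasureTheory.ae_of_all
          intro u
          simp only [Pi.zero_apply]
          have h1 := hφ1 u; have h2 := hψ1 u
          nlinarith
      _ = 2 * π * ε := hgtot
  -- point s where φ s = (m+1)π  :  α s ≥ 0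
  have hsin : Real.sin (((m:ℝ)+1) * π) = 0 := by
    have h := Real.sin_int_mul_pi (m+1)
    have h2 : (((m+1 : ℤ)) : ℝ) * π = ((m:ℝ)+1) * π := by push_cast; ring
    rwa [h2] at h
  have hcos2 : Real.cos (((m:ℝ)+1) * π) ^ 2 = 1 := by
    have h := Real.sin_sq_add_cos_sq (((m:ℝ)+1) * π)
    rw [hsin] at h; linear_combination h
  have hcosne : Real.cos (((m:ℝ)+1) * π) ≠ 0 := by
    intro h; rw [h] at hcos2; norm_num at hcos2
  obtain ⟨s, hsmem, hs⟩ : ∃ s ∈ Set.Icc tm tm1, φ s = ((m:ℝ)+1) * π := by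
    have : ((m:ℝ)+1) * π ∈ Set.Icc (φ tm) (φ tm1) := by
      rw [htm, htm1]; constructor <;> nlinarith
    exact intermediate_value_Icc htmle (hφd.continuous.continuousOn) this
  have hαs : 0 ≤ α s := by
    have he := heq s
    rw [hs, Real.cos_add, hsin] at he
    have he2 : a s = (a s + α s) * Real.cos (β s) := by
      refine mul_right_cancel₀ hcosne ?_
      linear_combination he
    have hp : 0 ≤ (a s + α s) * (1 - Real.cos (β s)) :=
      mul_nonneg (by linarith [hA1 s]) (by linarith [Real.cos_le_one (β s)])
    rw [mul_sub, mul_one] at hp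
    linarith
  -- point s' where φ s' + β s' = (m+1)π : α s' ≤ 0
  obtain ⟨s', hs'mem, hs'⟩ : ∃ s' ∈ Set.Icc tm tm1, φ s' + β s' = ((m:ℝ)+1) * π := by
    have hcont : ContinuousOn (fun u => φ u + β u) (Set.Icc tm tm1) :=
      (hφd.continuous.add hβd.continuous).continuousOn
    have : ((m:ℝ)+1) * π ∈ Set.Icc (φ tm + β tm) (φ tm1 + β tm1) := by
      rw [htm, htm1, hβtm, hβtm1]; constructor <;> nlinarith
    exact intermediate_value_Icc htmle hcont this
  have hαs' : α s' ≤ 0 := by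
    have he := heq s'
    rw [hs'] at he
    have hφs' : φ s' = ((m:ℝ)+1) * π - β s' := by linarith
    rw [hφs', Real.cos_sub, hsin] at he
    have he2 : a s' * Real.cos (β s') = a s' + α s' := by
      refine mul_right_cancel₀ hcosne ?_
      linear_combination he
    have hp : 0 ≤ a s' * (1 - Real.cos (β s')) :=
      mul_nonneg (by linarith [ha1 s']) (by linarith [Real.cos_le_one (β s')])
    rw [mul_sub, mul_one] at hp
    linarith
  -- combine
  have h2πε : 0 ≤ 2 * π * ε := by positivity
  rw [abs_le]
  constructor
  · -- α t ≥ α s - 2πε ≥ -2πε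
    rcases le_total s t with h | h
    · have := osc s t hsmem.1 h httm1
      rw [abs_le] at this; linarith [this.1, this.2]
    · have := osc t s httm h hsmem.2
      rw [abs_le] at this; linarith [this.1, this.2]
  · rcases le_total s' t with h | h
    · have := osc s' t hs'mem.1 h httm1
      rw [abs_le] at this; linarith [this.1, this.2]
    · have := osc t s' httm h hs'mem.2
      rw [abs_le] at this; linarith [this.1, this.2]
end

section
/- For a one-dimensional optimal transport problem with cost $d(x,y)=|x-y|$, if $\mu$ and $\nu$ are probability measures on $\mathbb{R}$ with cumulative distribution functions $f_\mu$ and $f_\nu$, then $\inf_{\rho\in\mathcal{P}(\mu,\nu)}\int |x-y|\,d\rho(x,y)=\int_{\mathbb{R}}|f_\mu(x)-f_\nu(x)|\,dx$, where $\mathcal{P}(\mu,\nu)$ is the set of couplings of $\mu$ and $\nu$. -/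
open MeasureTheory ProbabilityTheory Set Filter
open scoped ENNReal

namespace Stmt14Aux

/-! ### Quantile function -/

noncomputable def qf (μ : Measure ℝ) (u : ℝ) : ℝ := sInf {x | u ≤ cdf μ x}

lemma qf_nonempty (μ : Measure ℝ) [IsProbabilityMeasure μ] {u : ℝ} (hu : u < 1) :
    {x | u ≤ cdf μ x}.Nonempty := by
  have h := (tendsto_cdf_atTop μ).eventually (eventually_ge_nhds hu)
  exact h.exists

lemma qf_bddBelow (μ : Measure ℝ) [IsProbabilityMeasure μ] {u : ℝ} (hu : 0 < u) :
    BddBelow {x | u ≤ cdf μ x} := by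
  have h := (tendsto_cdf_atBot μ).eventually (eventually_lt_nhds hu)
  rw [Filter.eventually_atBot] at h
  obtain ⟨z, hz⟩ := h
  exact ⟨z, fun x hx => le_of_not_gt fun hxz => absurd hx (not_le.mpr (hz x hxz.le))⟩

lemma qf_le_iff (μ : Measure ℝ) [IsProbabilityMeasure μ] {u : ℝ} (hu : u ∈ Set.Ioo (0:ℝ) 1)
    (x : ℝ) : qf μ u ≤ x ↔ u ≤ cdf μ x := by
  constructor
  · intro h
    have key : u ≤ cdf μ (qf μ u) := by
      have h1 : ∀ y ∈ Set.Ioi (qf μ u), u ≤ cdf μ y := by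
        intro y hy
        obtain ⟨s, hs, hsy⟩ := Real.lt_sInf_add_pos (qf_nonempty μ hu.2) (sub_pos.mpr hy)
        calc u ≤ cdf μ s := hs
          _ ≤ cdf μ y := by
            refine (monotone_cdf μ) ?_
            have hr : sInf {x | u ≤ cdf μ x} = qf μ u := rfl
            rw [hr] at hsy
            linarith [hy.out]
      have hc : Tendsto (cdf μ) (nhdsWithin (qf μ u) (Set.Ioi (qf μ u))) (nhds (cdf μ (qf μ u))) :=
        ((cdf μ).right_continuous (qf μ u)).tendsto.mono_left
          (nhdsWithin_mono _ Set.Ioi_subset_Ici_self)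
      exact ge_of_tendsto hc (eventually_nhdsWithin_of_forall h1)
    exact key.trans ((monotone_cdf μ) h)
  · intro h
    exact csInf_le (qf_bddBelow μ hu.1) h

lemma qf_monotoneOn (μ : Measure ℝ) [IsProbabilityMeasure μ] :
    MonotoneOn (qf μ) (Set.Ioo (0:ℝ) 1) := by
  intro u hu v hv huv
  exact csInf_le_csInf (qf_bddBelow μ hu.1) (qf_nonempty μ hv.2)
    (fun x hx => le_trans huv hx)

/-! ### The uniform measure on (0,1) -/

noncomputable def P : Measure ℝ := volume.restrict (Set.Ioo 0 1)

instance : IsProbabilityMeasure P := by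
  constructor
  rw [P, Measure.restrict_apply_univ, Real.volume_Ioo]
  norm_num

lemma vol_inter (c d : ℝ) (hc : 0 ≤ c) (hd : d ≤ 1) :
    volume (Set.Ioc c d ∩ Set.Ioo 0 1) = ENNReal.ofReal (d - c) := by
  rcases le_or_gt c d with h | h
  · apply le_antisymm
    · calc volume (Set.Ioc c d ∩ Set.Ioo 0 1) ≤ volume (Set.Ioc c d) :=
        measure_mono Set.inter_subset_left
      _ = ENNReal.ofReal (d - c) := Real.volume_Ioc
    · calc ENNReal.ofReal (d - c) = volume (Set.Ioo c d) := Real.volume_Ioo.symm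
      _ ≤ volume (Set.Ioc c d ∩ Set.Ioo 0 1) := by
          apply measure_mono
          intro u hu
          exact ⟨⟨hu.1, hu.2.le⟩, lt_of_le_of_lt hc hu.1, lt_of_lt_of_le hu.2 hd⟩
  · rw [Set.Ioc_eq_empty (not_lt.mpr h.le), Set.empty_inter, measure_empty,
      ENNReal.ofReal_eq_zero.mpr (by linarith)]

lemma qf_aemeasurable (μ : Measure ℝ) [IsProbabilityMeasure μ] : AEMeasurable (qf μ) P :=
  aemeasurable_restrict_of_monotoneOn measurableSet_Ioo (qf_monotoneOn μ)

lemma map_qf (μ : Measure ℝ) [IsProbabilityMeasure μ] : P.map (qf μ) = μ := by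
  have : IsProbabilityMeasure (P.map (qf μ)) := Measure.isProbabilityMeasure_map (qf_aemeasurable μ)
  apply MeasureTheory.Measure.eq_of_cdf
  ext x
  rw [cdf_eq_real, cdf_eq_real, measureReal_def, measureReal_def]
  congr 1
  rw [Measure.map_apply_of_aemeasurable (qf_aemeasurable μ) measurableSet_Iic, P,
    Measure.restrict_apply' measurableSet_Ioo]
  have hset : (qf μ ⁻¹' Set.Iic x) ∩ Set.Ioo 0 1 = Set.Ioc 0 (cdf μ x) ∩ Set.Ioo 0 1 := by
    ext u
    simp only [Set.mem_inter_iff, Set.mem_preimage, Set.mem_Iic, Set.mem_Ioc, Set.mem_Ioo]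
    constructor
    · rintro ⟨h1, h2⟩
      exact ⟨⟨h2.1, (qf_le_iff μ h2 x).mp h1⟩, h2⟩
    · rintro ⟨h1, h2⟩
      exact ⟨(qf_le_iff μ h2 x).mpr h1.2, h2⟩
  rw [hset, vol_inter 0 (cdf μ x) le_rfl (cdf_le_one μ x), sub_zero, ofReal_cdf]

/-! ### Layer-cake representation of the cost -/

lemma layer (x y : ℝ) :
    ∫⁻ t, (Set.Ico (x ⊓ y) (x ⊔ y)).indicator (fun _ => (1:ℝ≥0∞)) t = ENNReal.ofReal |x - y| := by
  rw [lintegral_indicator measurableSet_Ico]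
  simp [Real.volume_Ico, max_sub_min_eq_abs, abs_sub_comm]

lemma meas_g : Measurable (fun q : (ℝ × ℝ) × ℝ =>
    (Set.Ico (q.1.1 ⊓ q.1.2) (q.1.1 ⊔ q.1.2)).indicator (fun _ => (1:ℝ≥0∞)) q.2) := by
  have : (fun q : (ℝ × ℝ) × ℝ =>
      (Set.Ico (q.1.1 ⊓ q.1.2) (q.1.1 ⊔ q.1.2)).indicator (fun _ => (1:ℝ≥0∞)) q.2)
      = Set.indicator {q : (ℝ × ℝ) × ℝ | q.1.1 ⊓ q.1.2 ≤ q.2 ∧ q.2 < q.1.1 ⊔ q.1.2}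
        (fun _ => (1:ℝ≥0∞)) := by
    ext q
    simp [Set.indicator_apply, Set.mem_Ico]
  rw [this]
  apply Measurable.indicator measurable_const
  apply MeasurableSet.inter
  · exact measurableSet_le ((measurable_fst.fst).min (measurable_fst.snd)) measurable_snd
  · exact measurableSet_lt measurable_snd ((measurable_fst.fst).max (measurable_fst.snd))

lemma crossing_meas (t : ℝ) : MeasurableSet {p : ℝ × ℝ | p.1 ⊓ p.2 ≤ t ∧ t < p.1 ⊔ p.2} :=
  (measurableSet_le ((measurable_fst).min (measurable_snd)) measurable_const).inter
    (measurableSet_lt measurable_const ((measurable_fst).max (measurable_snd)))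

lemma cost_eq (ρ : Measure (ℝ × ℝ)) [SFinite ρ] :
    ∫⁻ p, ENNReal.ofReal |p.1 - p.2| ∂ρ
      = ∫⁻ t, ρ {p : ℝ × ℝ | p.1 ⊓ p.2 ≤ t ∧ t < p.1 ⊔ p.2} := by
  have h1 : ∫⁻ p, ENNReal.ofReal |p.1 - p.2| ∂ρ
      = ∫⁻ p, ∫⁻ t, (Set.Ico (p.1 ⊓ p.2) (p.1 ⊔ p.2)).indicator (fun _ => (1:ℝ≥0∞)) t ∂volume ∂ρ := by
    refine lintegral_congr fun p => ?_
    rw [layer]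
  rw [h1, lintegral_lintegral_swap meas_g.aemeasurable]
  refine lintegral_congr fun t => ?_
  have : ∀ p : ℝ × ℝ, (Set.Ico (p.1 ⊓ p.2) (p.1 ⊔ p.2)).indicator (fun _ => (1:ℝ≥0∞)) t
      = ({p : ℝ × ℝ | p.1 ⊓ p.2 ≤ t ∧ t < p.1 ⊔ p.2}).indicator (fun _ => (1:ℝ≥0∞)) p := by
    intro p
    simp [Set.indicator_apply, Set.mem_Ico]
  simp_rw [this]
  rw [lintegral_indicator (crossing_meas t)]
  simp

/-! ### Lower bound for an arbitrary coupling -/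

lemma crossing_set_eq (t : ℝ) :
    {p : ℝ × ℝ | p.1 ⊓ p.2 ≤ t ∧ t < p.1 ⊔ p.2}
      = (Prod.fst ⁻¹' Set.Iic t \ Prod.snd ⁻¹' Set.Iic t)
        ∪ (Prod.snd ⁻¹' Set.Iic t \ Prod.fst ⁻¹' Set.Iic t) := by
  ext p
  simp only [Set.mem_setOf_eq, Set.mem_union, Set.mem_diff, Set.mem_preimage, Set.mem_Iic,
    inf_le_iff, lt_sup_iff, sup_le_iff, ← not_le]
  tauto

lemma crossing_lower (ρ : Measure (ℝ × ℝ)) [IsProbabilityMeasure ρ]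
    (μ ν : Measure ℝ) [IsProbabilityMeasure μ] [IsProbabilityMeasure ν]
    (h1 : ρ.map Prod.fst = μ) (h2 : ρ.map Prod.snd = ν) (t : ℝ) :
    ENNReal.ofReal |cdf μ t - cdf ν t| ≤ ρ {p : ℝ × ℝ | p.1 ⊓ p.2 ≤ t ∧ t < p.1 ⊔ p.2} := by
  set A : Set (ℝ × ℝ) := Prod.fst ⁻¹' Set.Iic t with hA
  set B : Set (ℝ × ℝ) := Prod.snd ⁻¹' Set.Iic t with hB
  have hAm : MeasurableSet A := measurable_fst measurableSet_Iic
  have hBm : MeasurableSet B := measurable_snd measurableSet_Iic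
  have hρA : ρ A = μ (Set.Iic t) := by
    rw [← h1, Measure.map_apply measurable_fst measurableSet_Iic]
  have hρB : ρ B = ν (Set.Iic t) := by
    rw [← h2, Measure.map_apply measurable_snd measurableSet_Iic]
  rw [crossing_set_eq t, measure_union disjoint_sdiff_sdiff (hBm.diff hAm)]
  · apply ENNReal.ofReal_le_of_le_toReal
    have fin : ∀ s : Set (ℝ × ℝ), ρ s ≠ ∞ := fun s => measure_ne_top ρ s
    rw [ENNReal.toReal_add (fin _) (fin _)]
    have e1 : ρ A = ρ (A \ B) + ρ (A ∩ B) := by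
      rw [← measure_union (Set.disjoint_of_subset_right Set.inter_subset_right disjoint_sdiff_left)
        (hAm.inter hBm), Set.diff_union_inter]
    have e2 : ρ B = ρ (B \ A) + ρ (B ∩ A) := by
      rw [← measure_union (Set.disjoint_of_subset_right Set.inter_subset_right disjoint_sdiff_left)
        (hBm.inter hAm), Set.diff_union_inter]
    have cdfμ : cdf μ t = (ρ A).toReal := by rw [hρA, cdf_eq_real, measureReal_def]
    have cdfν : cdf ν t = (ρ B).toReal := by rw [hρB, cdf_eq_real, measureReal_def]
    rw [cdfμ, cdfν, e1, e2, Set.inter_comm B A, ENNReal.toReal_add (fin _) (fin _),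
      ENNReal.toReal_add (fin _) (fin _)]
    have h3 : (ρ (A \ B)).toReal + (ρ (A ∩ B)).toReal - ((ρ (B \ A)).toReal + (ρ (A ∩ B)).toReal)
        = (ρ (A \ B)).toReal - (ρ (B \ A)).toReal := by ring
    rw [h3]
    calc |(ρ (A \ B)).toReal - (ρ (B \ A)).toReal|
        ≤ |(ρ (A \ B)).toReal| + |(ρ (B \ A)).toReal| := abs_sub _ _
      _ = (ρ (A \ B)).toReal + (ρ (B \ A)).toReal := by
          rw [abs_of_nonneg ENNReal.toReal_nonneg, abs_of_nonneg ENNReal.toReal_nonneg]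

/-! ### The quantile (monotone) coupling -/

variable (μ ν : Measure ℝ) [IsProbabilityMeasure μ] [IsProbabilityMeasure ν]

noncomputable def Qc : Measure (ℝ × ℝ) := P.map (fun u => (qf μ u, qf ν u))

lemma Qc_aemeasurable : AEMeasurable (fun u => (qf μ u, qf ν u)) P :=
  (qf_aemeasurable μ).prodMk (qf_aemeasurable ν)

instance : IsProbabilityMeasure (Qc μ ν) := Measure.isProbabilityMeasure_map (Qc_aemeasurable μ ν)

lemma Qc_fst : (Qc μ ν).map Prod.fst = μ := by
  rw [Qc, AEMeasurable.map_map_of_aemeasurable measurable_fst.aemeasurable (Qc_aemeasurable μ ν)]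
  exact map_qf μ

lemma Qc_snd : (Qc μ ν).map Prod.snd = ν := by
  rw [Qc, AEMeasurable.map_map_of_aemeasurable measurable_snd.aemeasurable (Qc_aemeasurable μ ν)]
  exact map_qf ν

lemma crossing_Qc (t : ℝ) :
    Qc μ ν {p : ℝ × ℝ | p.1 ⊓ p.2 ≤ t ∧ t < p.1 ⊔ p.2}
      = ENNReal.ofReal |cdf μ t - cdf ν t| := by
  set a := cdf μ t
  set b := cdf ν t
  rw [Qc, Measure.map_apply_of_aemeasurable (Qc_aemeasurable μ ν) (crossing_meas t), P,
    Measure.restrict_apply' measurableSet_Ioo]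
  have hset : (fun u => (qf μ u, qf ν u)) ⁻¹' {p : ℝ × ℝ | p.1 ⊓ p.2 ≤ t ∧ t < p.1 ⊔ p.2}
      ∩ Set.Ioo 0 1 = Set.Ioc (a ⊓ b) (a ⊔ b) ∩ Set.Ioo 0 1 := by
    ext u
    simp only [Set.mem_inter_iff, Set.mem_preimage, Set.mem_setOf_eq, Set.mem_Ioc, Set.mem_Ioo,
      and_congr_left_iff]
    intro hu
    simp only [← not_le, inf_le_iff, sup_le_iff, qf_le_iff μ hu, qf_le_iff ν hu,
      le_inf_iff, le_sup_iff]
    tauto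
  rw [hset, vol_inter _ _ (le_min (cdf_nonneg μ t) (cdf_nonneg ν t))
    (max_le (cdf_le_one μ t) (cdf_le_one ν t)), max_sub_min_eq_abs, abs_sub_comm]

/-! ### Finiteness of the cost -/

lemma cost_fin (ρ : Measure (ℝ × ℝ)) [IsProbabilityMeasure ρ]
    (h1 : ρ.map Prod.fst = μ) (h2 : ρ.map Prod.snd = ν)
    (hμ : Integrable (fun x : ℝ => |x|) μ) (hν : Integrable (fun x : ℝ => |x|) ν) :
    ∫⁻ p, ENNReal.ofReal |p.1 - p.2| ∂ρ < ∞ := by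
  have step : ∫⁻ p, ENNReal.ofReal |p.1 - p.2| ∂ρ
      ≤ ∫⁻ p : ℝ × ℝ, (ENNReal.ofReal |p.1| + ENNReal.ofReal |p.2|) ∂ρ := by
    refine lintegral_mono fun p => ?_
    rw [← ENNReal.ofReal_add (abs_nonneg _) (abs_nonneg _)]
    exact ENNReal.ofReal_le_ofReal (abs_sub _ _)
  have m1 : ∫⁻ p : ℝ × ℝ, ENNReal.ofReal |p.1| ∂ρ = ∫⁻ x, ENNReal.ofReal |x| ∂μ := by
    rw [← h1, lintegral_map (continuous_abs.measurable.ennreal_ofReal) measurable_fst]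
  have m2 : ∫⁻ p : ℝ × ℝ, ENNReal.ofReal |p.2| ∂ρ = ∫⁻ x, ENNReal.ofReal |x| ∂ν := by
    rw [← h2, lintegral_map (continuous_abs.measurable.ennreal_ofReal) measurable_snd]
  have fμ : ∫⁻ x, ENNReal.ofReal |x| ∂μ < ∞ :=
    (hasFiniteIntegral_iff_ofReal (ae_of_all _ fun x => abs_nonneg x)).mp hμ.hasFiniteIntegral
  have fν : ∫⁻ x, ENNReal.ofReal |x| ∂ν < ∞ :=
    (hasFiniteIntegral_iff_ofReal (ae_of_all _ fun x => abs_nonneg x)).mp hν.hasFiniteIntegral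
  calc ∫⁻ p, ENNReal.ofReal |p.1 - p.2| ∂ρ
      ≤ ∫⁻ p : ℝ × ℝ, (ENNReal.ofReal |p.1| + ENNReal.ofReal |p.2|) ∂ρ := step
    _ = ∫⁻ p : ℝ × ℝ, ENNReal.ofReal |p.1| ∂ρ + ∫⁻ p : ℝ × ℝ, ENNReal.ofReal |p.2| ∂ρ :=
        lintegral_add_left (measurable_fst.abs.ennreal_ofReal) _
    _ < ∞ := by rw [m1, m2]; exact ENNReal.add_lt_top.mpr ⟨fμ, fν⟩

lemma cost_integral_eq (ρ : Measure (ℝ × ℝ)) :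
    ∫ p : ℝ × ℝ, |p.1 - p.2| ∂ρ = (∫⁻ p, ENNReal.ofReal |p.1 - p.2| ∂ρ).toReal :=
  integral_eq_lintegral_of_nonneg_ae (ae_of_all _ fun p => abs_nonneg _)
    ((continuous_fst.sub continuous_snd).abs).aestronglyMeasurable

end Stmt14Aux

open Stmt14Aux

theorem stmt14 (μ ν : Measure ℝ) [IsProbabilityMeasure μ] [IsProbabilityMeasure ν]
    (hμ : Integrable (fun x : ℝ => |x|) μ) (hν : Integrable (fun x : ℝ => |x|) ν) :
    sInf {c : ℝ | ∃ ρ : Measure (ℝ × ℝ), IsProbabilityMeasure ρ ∧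
        ρ.map Prod.fst = μ ∧ ρ.map Prod.snd = ν ∧
        c = ∫ p : ℝ × ℝ, |p.1 - p.2| ∂ρ}
    = ∫ x : ℝ, |(μ (Set.Iic x)).toReal - (ν (Set.Iic x)).toReal| := by
  simp_rw [← measureReal_def, ← ProbabilityTheory.cdf_eq_real]
  set I : ℝ≥0∞ := ∫⁻ t, ENNReal.ofReal |cdf μ t - cdf ν t| with hI
  -- cost of the quantile coupling is I
  have QcI : ∫⁻ p, ENNReal.ofReal |p.1 - p.2| ∂(Qc μ ν) = I := by
    rw [cost_eq]
    exact lintegral_congr (crossing_Qc μ ν)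
  have Ifin : I ≠ ∞ := by
    rw [← QcI]
    exact (cost_fin μ ν (Qc μ ν) (Qc_fst μ ν) (Qc_snd μ ν) hμ hν).ne
  have RHSeq : ∫ x, |cdf μ x - cdf ν x| = I.toReal :=
    integral_eq_lintegral_of_nonneg_ae (ae_of_all _ fun x => abs_nonneg _)
      (((monotone_cdf μ).measurable.sub (monotone_cdf ν).measurable).abs).aestronglyMeasurable
  rw [RHSeq]
  -- the lower bound
  have lb : ∀ c ∈ {c : ℝ | ∃ ρ : Measure (ℝ × ℝ), IsProbabilityMeasure ρ ∧
      ρ.map Prod.fst = μ ∧ ρ.map Prod.snd = ν ∧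
      c = ∫ p : ℝ × ℝ, |p.1 - p.2| ∂ρ}, I.toReal ≤ c := by
    rintro c ⟨ρ, hρ, hf, hs, rfl⟩
    rw [cost_integral_eq]
    have hle : I ≤ ∫⁻ p, ENNReal.ofReal |p.1 - p.2| ∂ρ := by
      rw [cost_eq]
      exact lintegral_mono_ae (ae_of_all _ (crossing_lower ρ μ ν hf hs))
    exact (ENNReal.toReal_le_toReal Ifin (cost_fin μ ν ρ hf hs hμ hν).ne).mpr hle
  -- membership
  have mem : I.toReal ∈ {c : ℝ | ∃ ρ : Measure (ℝ × ℝ), IsProbabilityMeasure ρ ∧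
      ρ.map Prod.fst = μ ∧ ρ.map Prod.snd = ν ∧
      c = ∫ p : ℝ × ℝ, |p.1 - p.2| ∂ρ} := by
    refine ⟨Qc μ ν, inferInstance, Qc_fst μ ν, Qc_snd μ ν, ?_⟩
    rw [cost_integral_eq, QcI]
  exact le_antisymm (csInf_le ⟨I.toReal, lb⟩ mem) (le_csInf ⟨I.toReal, mem⟩ lb)
end
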